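/- Let B be a nondegenerate alternating bilinear form on a finite-dimensional complex vector space V and P : V → V self-adjoint with respect to B. Then every B-isotropic P-invariant subspace U ⊆ V is contained in some P-invariant Lagrangian subspace of V. -/

import Mathlib

open Module

private theorem aux_extend
    {V : Type*} [AddCommGroup V] [Module ℂ V] [FiniteDimensional ℂ V]
    (B : V →ₗ[ℂ] V →ₗ[ℂ] ℂ)
    (hBalt : ∀ v, B v v = 0)
    (hBnd : ∀ v, (∀ u, B v u = 0) → v = 0)
    (P : V →ₗ[ℂ] V)
    (hP : ∀ u v, B (P u) v = B u (P v)) :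
    ∀ n : ℕ, ∀ L : Submodule ℂ V,
      (∀ u ∈ L, ∀ v ∈ L, B u v = 0) → (∀ u ∈ L, P u ∈ L) →
      finrank ℂ V ≤ 2 * finrank ℂ L + n →
      ∃ M : Submodule ℂ V,
        L ≤ M ∧ (∀ u ∈ M, ∀ v ∈ M, B u v = 0) ∧
        2 * finrank ℂ M = finrank ℂ V ∧ ∀ u ∈ M, P u ∈ M := by
  have hRefl : B.IsRefl := LinearMap.IsAlt.isRefl hBalt
  have hNd : LinearMap.BilinForm.Nondegenerate B := hRefl.nondegenerate_iff_separatingLeft.2 hBnd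
  intro n
  induction n with
  | zero =>
      intro L hiso hinv hle
      refine ⟨L, le_refl _, hiso, ?_, hinv⟩
      -- 2 * finrank L ≤ finrank V always
      have hLE : L ≤ LinearMap.BilinForm.orthogonal B L := fun x hx =>
        (LinearMap.BilinForm.mem_orthogonal_iff).2 fun m hm => hiso m hm x hx
      have h1 : finrank ℂ (LinearMap.BilinForm.orthogonal B L) = finrank ℂ V - finrank ℂ L :=
        LinearMap.BilinForm.finrank_orthogonal hNd L
      have h2 : finrank ℂ L ≤ finrank ℂ (LinearMap.BilinForm.orthogonal B L) := Submodule.finrank_mono hLE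
      have h3 : finrank ℂ L ≤ finrank ℂ V := Submodule.finrank_le L
      omega
  | succ n ih =>
      intro L hiso hinv hle
      by_cases heq : 2 * finrank ℂ L = finrank ℂ V
      · exact ⟨L, le_refl _, hiso, heq, hinv⟩
      -- strict case
      set E := LinearMap.BilinForm.orthogonal B L with hE
      have hLE : L ≤ E := fun x hx =>
        (LinearMap.BilinForm.mem_orthogonal_iff).2 fun m hm => hiso m hm x hx
      have h1 : finrank ℂ E = finrank ℂ V - finrank ℂ L :=
        LinearMap.BilinForm.finrank_orthogonal hNd L
      have h2 : finrank ℂ L ≤ finrank ℂ E := Submodule.finrank_mono hLE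
      have h3 : finrank ℂ L ≤ finrank ℂ V := Submodule.finrank_le L
      have hlt : 2 * finrank ℂ L < finrank ℂ V :=
        lt_of_le_of_ne (by omega) heq
      have hPE : ∀ x ∈ E, P x ∈ E := by
        intro x hx
        refine (LinearMap.BilinForm.mem_orthogonal_iff).2 fun m hm => ?_
        have : B (P m) x = 0 := hx (P m) (hinv m hm)
        rw [← hP]
        exact this
      set p : E →ₗ[ℂ] E := P.restrict hPE with hp
      set L₀ : Submodule ℂ E := L.comap E.subtype with hL₀
      have hfr0 : finrank ℂ L₀ = finrank ℂ L :=
        (Submodule.comapSubtypeEquivOfLe hLE).finrank_eq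
      have hmap : L₀ ≤ L₀.comap p := by
        intro x hx
        simpa [hL₀, hp, Submodule.mem_comap] using hinv _ hx
      set q : (E ⧸ L₀) →ₗ[ℂ] (E ⧸ L₀) := Submodule.mapQ L₀ L₀ p hmap with hq
      have hquot : finrank ℂ (E ⧸ L₀) + finrank ℂ L₀ = finrank ℂ E :=
        Submodule.finrank_quotient_add_finrank L₀
      have hnt : Nontrivial (E ⧸ L₀) := by
        rw [← Module.finrank_pos_iff (R := ℂ)]
        omega
      obtain ⟨μ, hμ⟩ := Module.End.exists_eigenvalue (q : Module.End ℂ (E ⧸ L₀))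
      obtain ⟨x, hx⟩ := hμ.exists_hasEigenvector
      obtain ⟨y, rfl⟩ := Submodule.Quotient.mk_surjective L₀ x
      have hxeq : q (Submodule.Quotient.mk y) = μ • Submodule.Quotient.mk y :=
        hx.apply_eq_smul
      rw [hq, Submodule.mapQ_apply] at hxeq
      have hdiff : p y - μ • y ∈ L₀ := by
        rw [← Submodule.Quotient.eq]
        simpa using hxeq
      set v : V := (y : V) with hv
      have hvE : v ∈ E := y.2
      have hvL : v ∉ L := by
        intro h
        exact hx.2 ((Submodule.Quotient.mk_eq_zero L₀).2 h)
      have hPvL : P v - μ • v ∈ L := by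
        have : ((p y - μ • y : E) : V) ∈ L := hdiff
        simpa [hp, LinearMap.restrict_apply, hv] using this
      set M' : Submodule ℂ V := L ⊔ (ℂ ∙ v) with hM'
      have hvM' : v ∈ M' := Submodule.mem_sup_right (Submodule.mem_span_singleton_self v)
      have hmem : ∀ u ∈ M', ∃ l ∈ L, ∃ c : ℂ, u = l + c • v := by
        intro u hu
        rw [hM', Submodule.mem_sup] at hu
        obtain ⟨l, hl, w, hw, rfl⟩ := hu
        obtain ⟨c, rfl⟩ := Submodule.mem_span_singleton.1 hw
        exact ⟨l, hl, c, rfl⟩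
      have hBLv : ∀ l ∈ L, B l v = 0 := fun l hl => hvE l hl
      have hBvL : ∀ l ∈ L, B v l = 0 := fun l hl => hRefl _ _ (hBLv l hl)
      have hiso' : ∀ u ∈ M', ∀ w ∈ M', B u w = 0 := by
        intro a ha b hb
        obtain ⟨la, hla, ca, rfl⟩ := hmem a ha
        obtain ⟨lb, hlb, cb, rfl⟩ := hmem b hb
        simp [map_add, map_smul, hiso la hla lb hlb, hBLv la hla, hBvL lb hlb, hBalt v]
      have hinv' : ∀ u ∈ M', P u ∈ M' := by
        intro u hu
        obtain ⟨l, hl, c, rfl⟩ := hmem u hu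
        have hPv : P v ∈ M' := by
          have : P v = (P v - μ • v) + μ • v := by abel
          rw [this]
          exact M'.add_mem (Submodule.mem_sup_left hPvL) (M'.smul_mem μ hvM')
        rw [map_add, map_smul]
        exact M'.add_mem (Submodule.mem_sup_left (hinv l hl)) (M'.smul_mem c hPv)
      have hlt' : L < M' := lt_of_le_of_ne le_sup_left (by
        intro h
        exact hvL (h ▸ hvM'))
      have hfr : finrank ℂ L < finrank ℂ M' := Submodule.finrank_lt_finrank_of_lt hlt'
      obtain ⟨M, hM1, hM2, hM3, hM4⟩ := ih M' hiso' hinv' (by omega)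
      exact ⟨M, le_trans (le_of_lt hlt') hM1, hM2, hM3, hM4⟩

/-- **Every bi-isotropic admissible subspace extends to a bi-Lagrangian subspace.**
Let `B` be a nondegenerate alternating bilinear form on a finite-dimensional complex
vector space `V` and `P : V → V` self-adjoint with respect to `B`.  Then every
`B`-isotropic `P`-invariant subspace `U` is contained in some `P`-invariant Lagrangian
subspace of `V`. -/
theorem isotropic_invariant_extends_to_invariant_lagrangian
    {V : Type*} [AddCommGroup V] [Module ℂ V] [FiniteDimensional ℂ V]
    (B : V →ₗ[ℂ] V →ₗ[ℂ] ℂ)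
    (hBalt : ∀ v, B v v = 0)
    (hBnd : ∀ v, (∀ u, B v u = 0) → v = 0)
    (P : V →ₗ[ℂ] V)
    (hP : ∀ u v, B (P u) v = B u (P v))
    (U : Submodule ℂ V)
    (hUiso : ∀ u ∈ U, ∀ v ∈ U, B u v = 0)
    (hUinv : ∀ u ∈ U, P u ∈ U) :
    ∃ L : Submodule ℂ V,
      U ≤ L ∧
      (∀ u ∈ L, ∀ v ∈ L, B u v = 0) ∧
      2 * finrank ℂ L = finrank ℂ V ∧
      ∀ u ∈ L, P u ∈ L := by
  exact aux_extend B hBalt hBnd P hP (finrank ℂ V) U hUiso hUinv (by omega)
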